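/- arXiv:2011.11935 — 2 statements merged into one kernel-verified Lean document; each statement's English description precedes it below -/
import Mathlib

section
/- (Alon–Boppana) Let k ≥ 3 be an integer. There exists a positive constant C such that for every k-regular finite simple graph G of order n ≥ 2, the second largest eigenvalue λ₁ of the adjacency matrix of G (eigenvalues listed with multiplicity in nonincreasing order, λ₁ being the second entry) satisfies λ₁ ≥ √(k-1)·(1 - C·ln(k-1)/ln(n)). -/
open scoped Classical

/-- The adjacency matrix of a simple graph, over `ℝ`. -/
noncomputable def adjMat {V : Type*} [Fintype V] (G : SimpleGraph V) : Matrix V V ℝ :=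
  Matrix.of fun i j => if G.Adj i j then (1 : ℝ) else 0

/-- The smallest (real) eigenvalue of a matrix. -/
noncomputable def matMinEig {V : Type*} [Fintype V] (A : Matrix V V ℝ) : ℝ :=
  sInf {μ : ℝ | ∃ v : V → ℝ, v ≠ 0 ∧ A.mulVec v = μ • v}

/-- The smallest eigenvalue of a graph. -/
noncomputable def minEig {V : Type*} [Fintype V] (G : SimpleGraph V) : ℝ :=
  matMinEig (adjMat G)

/-- The degree (valency) of a vertex. -/
noncomputable def deg {V : Type*} [Fintype V] (G : SimpleGraph V) (v : V) : ℕ :=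
  (G.neighborSet v).ncard

lemma adjMat_isHermitian {V : Type*} [Fintype V] (G : SimpleGraph V) :
    (adjMat G).IsHermitian := by
  unfold Matrix.IsHermitian
  ext i j
  simp only [Matrix.conjTranspose_apply, adjMat, Matrix.of_apply, star_trivial]
  rw [SimpleGraph.adj_comm]

section AuxLemmas

open Matrix

lemma card_nbr {n k : ℕ} (G : SimpleGraph (Fin n)) (hreg : ∀ v, deg G v = k) (x : Fin n) :
    (Finset.univ.filter (fun y => G.Adj x y)).card = k := by
  have h := hreg x
  rw [deg, Set.ncard_eq_toFinset_card'] at h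
  rw [← h]; congr 1; ext y; simp [SimpleGraph.neighborSet]; exact Set.mem_toFinset.symm

lemma rowSum {n k : ℕ} (G : SimpleGraph (Fin n)) (hreg : ∀ v, deg G v = k) (x : Fin n) :
    ∑ y, adjMat G x y = (k : ℝ) := by
  have := card_nbr G hreg x
  simp [adjMat, Finset.sum_boole, this]

lemma adjMat_nonneg {V : Type*} [Fintype V] (G : SimpleGraph V) (x y : V) :
    0 ≤ adjMat G x y := by
  unfold adjMat; simp only [Matrix.of_apply]; positivity

lemma eig_abs_le {n k : ℕ} (G : SimpleGraph (Fin n)) (hreg : ∀ v, deg G v = k)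
    {t : ℝ} {w : Fin n → ℝ} (hw : w ≠ 0) (h : (adjMat G).mulVec w = t • w) : |t| ≤ k := by
  have hne : (Finset.univ : Finset (Fin n)).Nonempty := by
    rcases Function.ne_iff.1 hw with ⟨i, -⟩; exact ⟨i, Finset.mem_univ i⟩
  obtain ⟨j, -, hj⟩ := Finset.exists_max_image Finset.univ (fun i => |w i|) hne
  have hjpos : 0 < |w j| := by
    rcases Function.ne_iff.1 hw with ⟨i, hi⟩
    have : 0 < |w i| := abs_pos.2 hi
    exact lt_of_lt_of_le this (hj i (Finset.mem_univ i))
  have key : |t| * |w j| ≤ (k : ℝ) * |w j| := by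
    have h1 : |t * w j| = |((adjMat G).mulVec w) j| := by rw [h]; simp [abs_mul]
    have hmv : ((adjMat G).mulVec w) j = ∑ y, adjMat G j y * w y := by
      simp [Matrix.mulVec, dotProduct]
    have h2 : |((adjMat G).mulVec w) j| ≤ ∑ y, adjMat G j y * |w y| := by
      rw [hmv]
      refine le_trans (Finset.abs_sum_le_sum_abs _ _) ?_
      apply Finset.sum_le_sum
      intro y _
      rw [abs_mul, abs_of_nonneg (adjMat_nonneg G j y)]
    have h3 : ∑ y, adjMat G j y * |w y| ≤ ∑ y, adjMat G j y * |w j| := by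
      apply Finset.sum_le_sum
      intro y _
      exact mul_le_mul_of_nonneg_left (hj y (Finset.mem_univ y)) (adjMat_nonneg G j y)
    have h4 : ∑ y, adjMat G j y * |w j| = (k : ℝ) * |w j| := by
      rw [← Finset.sum_mul, rowSum G hreg]
    calc |t| * |w j| = |t * w j| := (abs_mul t (w j)).symm
      _ = |((adjMat G).mulVec w) j| := h1
      _ ≤ _ := h2
      _ ≤ _ := h3
      _ = _ := h4
  exact le_of_mul_le_mul_right key hjpos

lemma dot_sum {n : ℕ} (v d : Fin n → ℝ) (F : Fin n → (Fin n → ℝ)) :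
    v ⬝ᵥ (∑ i, d i • F i) = ∑ i, d i * (v ⬝ᵥ F i) := by
  simp only [dotProduct, Finset.sum_apply, Pi.smul_apply, smul_eq_mul, Finset.mul_sum]
  rw [Finset.sum_comm]
  exact Finset.sum_congr rfl fun i _ => Finset.sum_congr rfl fun x _ => by ring

lemma quad_form_le {n : ℕ} (G : SimpleGraph (Fin n)) (t : ℝ) (j0 : Fin n)
    (hmax : ∀ j, j ≠ j0 → (adjMat_isHermitian G).eigenvalues j ≤ t)
    (h : Fin n → ℝ)
    (horth : (⇑((adjMat_isHermitian G).eigenvectorBasis j0) : Fin n → ℝ) ⬝ᵥ h = 0) :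
    h ⬝ᵥ (adjMat G).mulVec h ≤ t * (h ⬝ᵥ h) := by
  set hA := adjMat_isHermitian G with hAdef
  set B := hA.eigenvectorBasis with hB
  set lam := hA.eigenvalues with hlam
  set c : Fin n → ℝ := fun i => (⇑(B i) : Fin n → ℝ) ⬝ᵥ h with hc
  have hcinner : ∀ i, (inner ℝ (B i) (WithLp.toLp 2 h) : ℝ) = c i := by
    intro i
    simp [hc, PiLp.inner_apply, RCLike.inner_apply, dotProduct, mul_comm]
  have hrep : ∑ i, c i • (⇑(B i) : Fin n → ℝ) = h := by
    have h0 := B.sum_repr' (WithLp.toLp 2 h)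
    simp_rw [hcinner] at h0
    simpa [WithLp.ofLp_sum] using congrArg WithLp.ofLp h0
  have hAh : (adjMat G).mulVec h = ∑ i, (c i * lam i) • (⇑(B i) : Fin n → ℝ) := by
    conv_lhs => rw [← hrep]
    rw [← Matrix.mulVecLin_apply, map_sum]
    refine Finset.sum_congr rfl fun i _ => ?_
    rw [_root_.map_smul, Matrix.mulVecLin_apply, hA.mulVec_eigenvectorBasis, smul_smul, mul_comm]
  have hdot1 : h ⬝ᵥ (adjMat G).mulVec h = ∑ i, lam i * (c i * c i) := by
    rw [hAh, dot_sum]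
    refine Finset.sum_congr rfl fun i _ => ?_
    rw [dotProduct_comm]
    show (c i * lam i) * c i = lam i * (c i * c i)
    ring
  have hdot2 : h ⬝ᵥ h = ∑ i, c i * c i := by
    conv_lhs => rw [← hrep]
    rw [dot_sum]
    refine Finset.sum_congr rfl fun i _ => ?_
    rw [dotProduct_comm, hrep]
  rw [hdot1, hdot2, Finset.mul_sum]
  apply Finset.sum_le_sum
  intro i _
  by_cases hi : i = j0
  · subst hi
    rw [show c i = 0 from horth]
    simp
  · exact mul_le_mul_of_nonneg_right (hmax i hi) (mul_self_nonneg _)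

lemma exists_far {n k : ℕ} (G : SimpleGraph (Fin n)) (hreg : ∀ v, deg G v = k)
    (hn : (k+1)^3 < n) (u : Fin n) :
    ∃ v : Fin n, ∀ x y : Fin n, (x = u ∨ G.Adj u x) → (y = v ∨ G.Adj v y) →
      x ≠ y ∧ ¬ G.Adj x y := by
  set step : Finset (Fin n) → Finset (Fin n) :=
    fun S => S ∪ S.biUnion (fun x => Finset.univ.filter (fun y => G.Adj x y)) with hstep
  have hsub : ∀ S, S ⊆ step S := fun S => Finset.subset_union_left
  have hmem : ∀ S (x y : Fin n), x ∈ S → G.Adj x y → y ∈ step S := by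
    intro S x y hx hxy
    exact Finset.mem_union_right _ (Finset.mem_biUnion.2 ⟨x, hx, by simp [hxy]⟩)
  have hcard : ∀ S : Finset (Fin n), (step S).card ≤ S.card * (k+1) := by
    intro S
    calc (step S).card ≤ S.card + (S.biUnion _).card := Finset.card_union_le _ _
      _ ≤ S.card + ∑ x ∈ S, (Finset.univ.filter (fun y => G.Adj x y)).card :=
          Nat.add_le_add_left (Finset.card_biUnion_le) _
      _ = S.card + S.card * k := by
          rw [Finset.sum_congr rfl (fun x _ => card_nbr G hreg x), Finset.sum_const,
            smul_eq_mul]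
      _ = S.card * (k+1) := by ring
  set B : Finset (Fin n) := step (step (step {u})) with hB
  have hBcard : B.card ≤ (k+1)^3 := by
    have h0 : ({u} : Finset (Fin n)).card = 1 := Finset.card_singleton u
    have h1 := hcard {u}
    have h2 := hcard (step {u})
    have h3 := hcard (step (step {u}))
    rw [h0, one_mul] at h1
    have m1 : (step {u}).card ≤ (k+1) := h1
    have m2 : (step (step {u})).card ≤ (k+1)*(k+1) := by nlinarith
    have m3 : (step (step (step {u}))).card ≤ (k+1)*(k+1)*(k+1) := by nlinarith
    calc B.card ≤ (k+1)*(k+1)*(k+1) := m3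
      _ = (k+1)^3 := by ring
  obtain ⟨v, hv⟩ : ∃ v : Fin n, v ∉ B := by
    by_contra hcon
    push_neg at hcon
    have : (Finset.univ : Finset (Fin n)) ⊆ B := fun x _ => hcon x
    have := Finset.card_le_card this
    simp only [Finset.card_univ, Fintype.card_fin] at this
    omega
  refine ⟨v, fun x y hx hy => ?_⟩
  have hu : u ∈ ({u} : Finset (Fin n)) := Finset.mem_singleton_self u
  have hx1 : x ∈ step {u} := by
    rcases hx with rfl | hx
    · exact hsub _ hu
    · exact hmem _ u x hu hx
  have hx2 : x ∈ step (step {u}) := hsub (step {u}) hx1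
  constructor
  · rintro rfl
    rcases hy with rfl | hy
    · exact hv (hsub (step (step {u})) hx2)
    · exact hv (hmem (step (step {u})) x v hx2 hy.symm)
  · intro hxy
    have hy2 : y ∈ step (step {u}) := hmem _ x y hx1 hxy
    rcases hy with rfl | hy
    · exact hv (hsub (step (step {u})) hy2)
    · exact hv (hmem (step (step {u})) y v hy2 hy.symm)

lemma nbr_sum {n k : ℕ} (G : SimpleGraph (Fin n)) (hreg : ∀ v, deg G v = k)
    (w : Fin n) (c : ℝ) :
    ∑ x, (if G.Adj w x then c else 0) = k * c := by
  rw [← Finset.sum_filter, Finset.sum_const, card_nbr G hreg w, nsmul_eq_mul]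

lemma erase_sum {n k : ℕ} (G : SimpleGraph (Fin n)) (hreg : ∀ v, deg G v = k)
    (w : Fin n) (c : ℝ) :
    ∑ x ∈ Finset.univ.erase w, (if G.Adj w x then c else 0) = k * c := by
  rw [← nbr_sum G hreg w c, ← Finset.add_sum_erase _ _ (Finset.mem_univ w)]
  simp [SimpleGraph.irrefl]

lemma testvec {n k : ℕ} (G : SimpleGraph (Fin n)) (hreg : ∀ v, deg G v = k) (hk : 3 ≤ k)
    (w : Fin n) (r : ℝ) (hrdef : r = Real.sqrt ((k:ℝ)-1))
    (f : Fin n → ℝ) (hfdef : f = fun x => if x = w then 1 else if G.Adj w x then r⁻¹ else 0) :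
    (∀ x, 0 ≤ f x) ∧ f w = 1 ∧ 1 ≤ f ⬝ᵥ f ∧ r * (f ⬝ᵥ f) ≤ f ⬝ᵥ (adjMat G).mulVec f := by
  have hk1 : (2:ℝ) ≤ (k:ℝ) - 1 := by
    have : (3:ℝ) ≤ (k:ℝ) := by exact_mod_cast hk
    linarith
  have hr : 0 < r := by rw [hrdef]; exact Real.sqrt_pos.2 (by linarith)
  have hr2 : r^2 = (k:ℝ) - 1 := by rw [hrdef]; exact Real.sq_sqrt (by linarith)
  have hrinv : 0 < r⁻¹ := inv_pos.2 hr
  have hf0 : ∀ x, 0 ≤ f x := by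
    intro x; rw [hfdef]; dsimp only
    split_ifs <;> first | exact zero_le_one | exact le_of_lt hrinv | exact le_rfl
  have hfw : f w = 1 := by rw [hfdef]; simp
  have hff : f ⬝ᵥ f = 1 + (k:ℝ) * (r⁻¹ * r⁻¹) := by
    show ∑ x, f x * f x = _
    rw [← Finset.add_sum_erase _ _ (Finset.mem_univ w), hfw]
    have hcong : ∀ x ∈ Finset.univ.erase w,
        f x * f x = (if G.Adj w x then r⁻¹ * r⁻¹ else 0) := by
      intro x hx
      have hxw : x ≠ w := (Finset.mem_erase.1 hx).1
      rw [hfdef]; dsimp only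
      rw [if_neg hxw]
      split_ifs <;> simp
    rw [Finset.sum_congr rfl hcong, erase_sum G hreg]
    ring
  have hff1 : 1 ≤ f ⬝ᵥ f := by
    rw [hff]
    have : 0 ≤ (k:ℝ) * (r⁻¹ * r⁻¹) := by positivity
    linarith
  refine ⟨hf0, hfw, hff1, ?_⟩
  have hmv : f ⬝ᵥ (adjMat G).mulVec f = ∑ x, f x * (∑ y, adjMat G x y * f y) := by
    simp [Matrix.mulVec, dotProduct]
  have hrow : ∀ x y, adjMat G x y * f y = (if G.Adj x y then f y else 0) := by
    intro x y
    unfold adjMat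
    simp only [Matrix.of_apply]
    split_ifs <;> simp
  have hlow : 2 * ((k:ℝ) * r⁻¹) ≤ f ⬝ᵥ (adjMat G).mulVec f := by
    rw [hmv]
    have hbound : ∀ x ∈ Finset.univ,
        (if x = w then (k:ℝ) * r⁻¹ else if G.Adj w x then r⁻¹ else 0)
          ≤ f x * (∑ y, adjMat G x y * f y) := by
      intro x _
      by_cases hxw : x = w
      · subst hxw
        rw [if_pos rfl, hfw, one_mul]
        have : ∑ y, adjMat G x y * f y = (k:ℝ) * r⁻¹ := by
          have : ∀ y, adjMat G x y * f y = (if G.Adj x y then r⁻¹ else 0) := by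
            intro y
            rw [hrow]
            by_cases hadj : G.Adj x y
            · rw [if_pos hadj, if_pos hadj, hfdef]
              dsimp only
              rw [if_neg (G.ne_of_adj hadj).symm, if_pos hadj]
            · rw [if_neg hadj, if_neg hadj]
          rw [Finset.sum_congr rfl (fun y _ => this y), nbr_sum G hreg]
        rw [this]
      · rw [if_neg hxw]
        by_cases hadj : G.Adj w x
        · rw [if_pos hadj]
          have hfx : f x = r⁻¹ := by
            rw [hfdef]; dsimp only; rw [if_neg hxw, if_pos hadj]
          have hterm : (1:ℝ) ≤ ∑ y, adjMat G x y * f y := by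
            have hsingle : adjMat G x w * f w ≤ ∑ y, adjMat G x y * f y := by
              apply Finset.single_le_sum (f := fun y => adjMat G x y * f y)
                (fun y _ => mul_nonneg (adjMat_nonneg G x y) (hf0 y)) (Finset.mem_univ w)
            have : adjMat G x w * f w = 1 := by
              rw [hfw, mul_one]
              unfold adjMat
              simp only [Matrix.of_apply]
              rw [if_pos hadj.symm]
            linarith
          calc r⁻¹ = r⁻¹ * 1 := (mul_one _).symm
            _ ≤ f x * (∑ y, adjMat G x y * f y) := by
                rw [hfx]
                exact mul_le_mul_of_nonneg_left hterm (le_of_lt hrinv)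
        · rw [if_neg hadj]
          exact mul_nonneg (hf0 x)
            (Finset.sum_nonneg fun y _ => mul_nonneg (adjMat_nonneg G x y) (hf0 y))
    have hsum := Finset.sum_le_sum hbound
    have hDsum : ∑ x, (if x = w then (k:ℝ) * r⁻¹ else if G.Adj w x then r⁻¹ else 0)
        = 2 * ((k:ℝ) * r⁻¹) := by
      rw [← Finset.add_sum_erase _ _ (Finset.mem_univ w), if_pos rfl]
      have hcong : ∀ x ∈ Finset.univ.erase w,
          (if x = w then (k:ℝ) * r⁻¹ else if G.Adj w x then r⁻¹ else 0)
            = (if G.Adj w x then r⁻¹ else 0) := by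
        intro x hx
        rw [if_neg (Finset.mem_erase.1 hx).1]
      rw [Finset.sum_congr rfl hcong, erase_sum G hreg]
      ring
    rw [hDsum] at hsum
    exact hsum
  have hnum : r * (f ⬝ᵥ f) ≤ 2 * ((k:ℝ) * r⁻¹) := by
    rw [hff]
    have hri : r * r⁻¹ = 1 := mul_inv_cancel₀ (ne_of_gt hr)
    have hk0 : (0:ℝ) < (k:ℝ) := by linarith
    have h3 : r = ((k:ℝ)-1)*r⁻¹ := by
      have h4 : r * r = (k:ℝ) - 1 := by nlinarith [hr2]
      have h5 : (r * r) * r⁻¹ = ((k:ℝ)-1) * r⁻¹ := by rw [h4]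
      rwa [mul_assoc, hri, mul_one] at h5
    rw [show r * (1 + (k:ℝ) * (r⁻¹ * r⁻¹)) = r + (k:ℝ) * ((r * r⁻¹) * r⁻¹) by ring, hri,
      one_mul]
    nlinarith [h3, hrinv]
  linarith

end AuxLemmas
open Matrix in
set_option maxHeartbeats 4000000 in
/-- **Alon–Boppana.** For each integer `k ≥ 3` there is a positive constant `C` such that
for every `k`-regular graph on `n ≥ 2` vertices, the second entry `μ 1` of the
nonincreasing list `μ` of eigenvalues of the adjacency matrix (with multiplicity)
satisfies `μ 1 ≥ √(k-1) (1 - C ln(k-1)/ln n)`. -/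
theorem stmt2 (k : ℕ) (hk : 3 ≤ k) :
    ∃ C : ℝ, 0 < C ∧ ∀ (n : ℕ) (hn : 2 ≤ n) (G : SimpleGraph (Fin n)),
      (∀ v, deg G v = k) →
      ∀ (μ : Fin n → ℝ) (σ : Equiv.Perm (Fin n)),
        (∀ i, μ i = (adjMat_isHermitian G).eigenvalues (σ i)) →
        Antitone μ →
        Real.sqrt ((k : ℝ) - 1) * (1 - C * Real.log ((k : ℝ) - 1) / Real.log n)
          ≤ μ ⟨1, by omega⟩ := by
  have hk3 : (3:ℝ) ≤ (k:ℝ) := by exact_mod_cast hk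
  have hk1 : (2:ℝ) ≤ (k:ℝ) - 1 := by linarith
  have hlog2 : (0:ℝ) < Real.log 2 := Real.log_pos one_lt_two
  have hlogk1 : (0:ℝ) < Real.log ((k:ℝ)+1) := Real.log_pos (by linarith)
  have hL : Real.log 2 ≤ Real.log ((k:ℝ)-1) := Real.log_le_log (by norm_num) (by linarith)
  have hL0 : (0:ℝ) < Real.log ((k:ℝ)-1) := lt_of_lt_of_le hlog2 hL
  refine ⟨3*((k:ℝ)+1) * Real.log ((k:ℝ)+1) / Real.log 2, by positivity, ?_⟩
  set C : ℝ := 3*((k:ℝ)+1) * Real.log ((k:ℝ)+1) / Real.log 2 with hCdef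
  intro n hn G hreg μ σ hμ hanti
  have hn1 : (1:ℝ) < (n:ℝ) := by exact_mod_cast hn
  have hlogn : (0:ℝ) < Real.log n := Real.log_pos hn1
  set r : ℝ := Real.sqrt ((k:ℝ)-1) with hrdef
  have hr1 : (1:ℝ) ≤ r := by rw [hrdef]; rw [Real.one_le_sqrt]; linarith
  have hr0 : (0:ℝ) < r := lt_of_lt_of_le one_pos hr1
  set X : ℝ := C * Real.log ((k:ℝ)-1) / Real.log n with hXdef
  have hX0 : 0 ≤ X := by positivity
  set hA := adjMat_isHermitian G with hAdef
  set B := hA.eigenvectorBasis with hBdef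
  have hvecne : ∀ j : Fin n, (⇑(B j) : Fin n → ℝ) ≠ 0 := by
    intro j h0
    refine B.orthonormal.ne_zero j ?_
    have := congrArg (WithLp.toLp 2) h0
    rwa [WithLp.toLp_ofLp, WithLp.toLp_zero] at this
  have heig : ∀ j : Fin n, |hA.eigenvalues j| ≤ (k:ℝ) := fun j =>
    eig_abs_le G hreg (hvecne j) (hA.mulVec_eigenvectorBasis j)
  by_cases hbig : (k+1)^3 < n
  · -- large case: second eigenvalue is at least √(k-1)
    set u : Fin n := ⟨0, by omega⟩ with hudef
    obtain ⟨v, hsep⟩ := exists_far G hreg hbig u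
    set f : Fin n → ℝ := fun x => if x = u then 1 else if G.Adj u x then r⁻¹ else 0 with hfdef
    set g : Fin n → ℝ := fun x => if x = v then 1 else if G.Adj v x then r⁻¹ else 0 with hgdef
    obtain ⟨hf0, hfu, hff1, hfA⟩ := testvec G hreg hk u r hrdef f hfdef
    obtain ⟨hg0, hgv, hgg1, hgA⟩ := testvec G hreg hk v r hrdef g hgdef
    have hsuppf : ∀ x, f x ≠ 0 → (x = u ∨ G.Adj u x) := by
      intro x hx
      by_contra hcon
      push_neg at hcon
      apply hx
      rw [hfdef]; dsimp only; rw [if_neg hcon.1, if_neg hcon.2]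
    have hsuppg : ∀ x, g x ≠ 0 → (x = v ∨ G.Adj v x) := by
      intro x hx
      by_contra hcon
      push_neg at hcon
      apply hx
      rw [hgdef]; dsimp only; rw [if_neg hcon.1, if_neg hcon.2]
    have hfg : f ⬝ᵥ g = 0 := by
      apply Finset.sum_eq_zero
      intro x _
      by_cases hfx : f x = 0
      · rw [hfx, zero_mul]
      by_cases hgx : g x = 0
      · rw [hgx, mul_zero]
      exact absurd rfl (hsep x x (hsuppf x hfx) (hsuppg x hgx)).1
    have hgf : g ⬝ᵥ f = 0 := by rw [dotProduct_comm]; exact hfg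
    have hAzero : ∀ x y, f x ≠ 0 → g y ≠ 0 → adjMat G x y = 0 := by
      intro x y hfx hgy
      have := (hsep x y (hsuppf x hfx) (hsuppg y hgy)).2
      unfold adjMat
      simp only [Matrix.of_apply]
      rw [if_neg this]
    have hfAg : f ⬝ᵥ (adjMat G).mulVec g = 0 := by
      apply Finset.sum_eq_zero
      intro x _
      by_cases hfx : f x = 0
      · rw [hfx, zero_mul]
      have : (adjMat G).mulVec g x = 0 := by
        have hx2 : (adjMat G).mulVec g x = ∑ y, adjMat G x y * g y := rfl
        rw [hx2]
        apply Finset.sum_eq_zero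
        intro y _
        by_cases hgy : g y = 0
        · rw [hgy, mul_zero]
        · rw [hAzero x y hfx hgy, zero_mul]
      rw [this, mul_zero]
    have hgAf : g ⬝ᵥ (adjMat G).mulVec f = 0 := by
      apply Finset.sum_eq_zero
      intro x _
      by_cases hgx : g x = 0
      · rw [hgx, zero_mul]
      have : (adjMat G).mulVec f x = 0 := by
        have hx2 : (adjMat G).mulVec f x = ∑ y, adjMat G x y * f y := rfl
        rw [hx2]
        apply Finset.sum_eq_zero
        intro y _
        by_cases hfy : f y = 0
        · rw [hfy, mul_zero]
        · rw [show adjMat G x y = 0 from ?_, zero_mul]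
          have := (hsep y x (hsuppf y hfy) (hsuppg x hgx)).2
          unfold adjMat
          simp only [Matrix.of_apply]
          rw [if_neg (fun hxy => this hxy.symm)]
      rw [this, mul_zero]
    set j0 : Fin n := σ ⟨0, by omega⟩ with hj0def
    have hmax : ∀ j, j ≠ j0 → hA.eigenvalues j ≤ μ ⟨1, by omega⟩ := by
      intro j hj
      have h1 := hμ (σ.symm j)
      rw [Equiv.apply_symm_apply] at h1
      rw [← h1]
      apply hanti
      have hne : σ.symm j ≠ ⟨0, by omega⟩ := by
        intro hh
        exact hj (((Equiv.symm_apply_eq σ).1 hh) ▸ rfl)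
      have hval : (σ.symm j).val ≠ 0 := fun h0 => hne (Fin.ext h0)
      rw [Fin.le_def]
      simpa using Nat.one_le_iff_ne_zero.2 hval
    have hrle : r ≤ μ ⟨1, by omega⟩ := by
      set wtop : Fin n → ℝ := ⇑(B j0) with hwdef
      set a : ℝ := wtop ⬝ᵥ g with hadef
      set b : ℝ := wtop ⬝ᵥ f with hbdef
      by_cases hb : b = 0
      · have hquad := quad_form_le G (μ ⟨1, by omega⟩) j0 hmax f hb
        have hffpos : 0 < f ⬝ᵥ f := lt_of_lt_of_le one_pos hff1
        clear_value b a wtop g f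
        nlinarith [hfA, hquad, hffpos]
      · set h : Fin n → ℝ := a • f - b • g with hhdef
        have horth : wtop ⬝ᵥ h = 0 := by
          rw [hhdef, dotProduct_sub, dotProduct_smul, dotProduct_smul,
            ← hadef, ← hbdef]
          simp only [smul_eq_mul]
          ring
        have hmvh : (adjMat G).mulVec h = a • (adjMat G).mulVec f - b • (adjMat G).mulVec g := by
          rw [hhdef, Matrix.mulVec_sub, Matrix.mulVec_smul, Matrix.mulVec_smul]
        have hhh : h ⬝ᵥ h = a^2 * (f ⬝ᵥ f) + b^2 * (g ⬝ᵥ g) := by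
          rw [hhdef]
          simp only [sub_dotProduct, dotProduct_sub, smul_dotProduct,
            dotProduct_smul, smul_eq_mul, hfg, hgf]
          ring
        have hhAh : h ⬝ᵥ (adjMat G).mulVec h
            = a^2 * (f ⬝ᵥ (adjMat G).mulVec f) + b^2 * (g ⬝ᵥ (adjMat G).mulVec g) := by
          rw [hhdef, hmvh]
          simp only [sub_dotProduct, dotProduct_sub, smul_dotProduct,
            dotProduct_smul, smul_eq_mul, hfAg, hgAf]
          ring
        have hquad := quad_form_le G (μ ⟨1, by omega⟩) j0 hmax h horth
        clear_value h b a wtop g f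
        have hlow : r * (h ⬝ᵥ h) ≤ h ⬝ᵥ (adjMat G).mulVec h := by
          rw [hhh, hhAh]
          nlinarith [hfA, hgA, sq_nonneg a, sq_nonneg b]
        have hhpos : 0 < h ⬝ᵥ h := by
          rw [hhh]
          have hb2 : 0 < b^2 := by positivity
          nlinarith [sq_nonneg a, hff1, hgg1, hb2]
        nlinarith [hlow, hquad, hhpos]
    have hmono : r * (1 - X) ≤ r * 1 := mul_le_mul_of_nonneg_left (by linarith) (le_of_lt hr0)
    rw [mul_one] at hmono
    linarith
  · -- small case: use the trivial bound μ₁ ≥ -k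
    push_neg at hbig
    have hmu1 : -(k:ℝ) ≤ μ ⟨1, by omega⟩ := by
      rw [hμ ⟨1, by omega⟩]
      have := heig (σ ⟨1, by omega⟩)
      have := abs_le.1 this
      linarith [this.1]
    have hnle : Real.log n ≤ 3 * Real.log ((k:ℝ)+1) := by
      have hcast : (n:ℝ) ≤ ((k:ℝ)+1)^3 := by
        have : ((k+1)^3 : ℕ) = (((k:ℝ)+1)^3 : ℝ) := by push_cast; ring
        calc (n:ℝ) ≤ ((k+1)^3 : ℕ) := by exact_mod_cast hbig
          _ = _ := this
      calc Real.log n ≤ Real.log (((k:ℝ)+1)^3) :=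
            Real.log_le_log (by positivity) hcast
        _ = 3 * Real.log ((k:ℝ)+1) := by rw [Real.log_pow]; norm_num
    have hCL : ((k:ℝ)+1) * Real.log n ≤ C * Real.log ((k:ℝ)-1) := by
      have e1 : C * Real.log ((k:ℝ)-1)
          = 3*((k:ℝ)+1)*Real.log ((k:ℝ)+1) * (Real.log ((k:ℝ)-1) / Real.log 2) := by
        rw [hCdef]; field_simp
      have e2 : (1:ℝ) ≤ Real.log ((k:ℝ)-1)/Real.log 2 := (one_le_div hlog2).2 hL
      have hP0 : (0:ℝ) ≤ 3*((k:ℝ)+1)*Real.log ((k:ℝ)+1) := by positivity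
      have s1 : 3*((k:ℝ)+1)*Real.log ((k:ℝ)+1)
          ≤ 3*((k:ℝ)+1)*Real.log ((k:ℝ)+1) * (Real.log ((k:ℝ)-1)/Real.log 2) := by
        nlinarith [e2, hP0]
      have s2 : ((k:ℝ)+1) * Real.log n ≤ 3*((k:ℝ)+1)*Real.log ((k:ℝ)+1) := by
        nlinarith [hnle, hk3]
      linarith [e1 ▸ (le_trans s2 s1)]
    have hX : (k:ℝ)+1 ≤ X := by
      rw [hXdef]
      rw [le_div_iff₀ hlogn]
      exact hCL
    clear_value X r C
    have h5 : r*((k:ℝ)+1) ≤ r * X := mul_le_mul_of_nonneg_left hX (le_of_lt hr0)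
    have h6 : (k:ℝ) ≤ (k:ℝ)*r := by nlinarith [hr1, hk3]
    nlinarith [h5, h6, hmu1]
end

section
/- (Hoffman) Let λ be a positive real number. Then there exists a positive integer T = T(λ) such that: if G is a finite simple graph with smallest eigenvalue λ_min(G) ≥ -λ, then G contains neither K_{1,T} nor K̃_{2T} as an induced subgraph. -/
open scoped Classical
open Matrix

/-- The star `K_{1,t}`: vertex `0` is the center, adjacent to the `t` pairwise
non-adjacent leaves. -/
def starG (t : ℕ) : SimpleGraph (Fin (t + 1)) :=
  SimpleGraph.fromRel (fun x _ => x = 0)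

/-- The graph `K̃_{2t}` on `2t+1` vertices: a clique on the first `2t` vertices,
together with a last vertex adjacent to exactly the first `t` vertices of the clique. -/
def tildeK (t : ℕ) : SimpleGraph (Fin (2 * t + 1)) :=
  SimpleGraph.fromRel
    (fun x y => (x.val < 2 * t ∧ y.val < 2 * t) ∨ (x.val = 2 * t ∧ y.val < t))

lemma adjMat_isHermitian_s9 {n : ℕ} (G : SimpleGraph (Fin n)) : (adjMat G).IsHermitian := by
  ext i j
  simp [adjMat, Matrix.conjTranspose_apply, SimpleGraph.adj_comm, Matrix.IsHermitian]

lemma minEig_mul_le {n : ℕ} (G : SimpleGraph (Fin n)) (x : Fin n → ℝ) (hx : x ≠ 0) :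
    minEig G * (x ⬝ᵥ x) ≤ x ⬝ᵥ (adjMat G).mulVec x := by
  classical
  have hn : Nonempty (Fin n) := by
    rcases Function.ne_iff.1 hx with ⟨i, _⟩
    exact ⟨i⟩
  set A := adjMat G with hAdef
  have hA : A.IsHermitian := adjMat_isHermitian_s9 G
  -- entries bounded by 1
  have hAbs : ∀ i j, |A i j| ≤ 1 := by
    intro i j
    simp only [hAdef, adjMat, Matrix.of_apply]
    split <;> simp
  -- the set of eigenvalues is bounded below by -n
  have hbdd : ∀ μ ∈ {μ : ℝ | ∃ v : Fin n → ℝ, v ≠ 0 ∧ A.mulVec v = μ • v}, -(n : ℝ) ≤ μ := by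
    rintro μ ⟨v, hv, hmv⟩
    obtain ⟨i, -, hi⟩ := Finset.exists_max_image Finset.univ (fun i => |v i|)
      ⟨Classical.arbitrary _, Finset.mem_univ _⟩
    have hvi : 0 < |v i| := by
      rcases Function.ne_iff.1 hv with ⟨j, hj⟩
      exact lt_of_lt_of_le (abs_pos.2 hj) (hi j (Finset.mem_univ j))
    have h1 : |μ| * |v i| ≤ (n : ℝ) * |v i| := by
      have := congrFun hmv i
      simp only [Matrix.mulVec, dotProduct, Pi.smul_apply, smul_eq_mul] at this
      calc |μ| * |v i| = |∑ j, A i j * v j| := by rw [← abs_mul, this]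
        _ ≤ ∑ j, |A i j * v j| := Finset.abs_sum_le_sum_abs _ _
        _ ≤ ∑ _j : Fin n, |v i| := by
            refine Finset.sum_le_sum fun j _ => ?_
            rw [abs_mul]
            calc |A i j| * |v j| ≤ 1 * |v i| := by
                  exact mul_le_mul (hAbs i j) (hi j (Finset.mem_univ j)) (abs_nonneg _) one_pos.le
              _ = |v i| := one_mul _
        _ = (n : ℝ) * |v i| := by simp [Finset.sum_const, mul_comm]
    have : |μ| ≤ (n : ℝ) := le_of_mul_le_mul_right (by linarith [h1]) hvi
    linarith [neg_abs_le μ, abs_nonneg μ]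
  obtain ⟨i₀, -, hi₀⟩ := Finset.exists_min_image Finset.univ hA.eigenvalues
    ⟨Classical.arbitrary _, Finset.mem_univ _⟩
  set μ₀ := hA.eigenvalues i₀ with hμ₀
  -- μ₀ is in the eigenvalue set
  have hmem : μ₀ ∈ {μ : ℝ | ∃ v : Fin n → ℝ, v ≠ 0 ∧ A.mulVec v = μ • v} :=
    ⟨hA.eigenvectorBasis i₀, by intro h; apply hA.eigenvectorBasis.orthonormal.ne_zero i₀; ext j; exact congrFun h j,
      hA.mulVec_eigenvectorBasis i₀⟩
  have hminle : minEig G ≤ μ₀ :=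
    csInf_le ⟨-(n : ℝ), hbdd⟩ hmem
  -- Rayleigh quotient bound
  set b := hA.eigenvectorBasis with hbdefn
  set v : Fin n → Fin n → ℝ := fun i => ⇑(b i) with hvdef
  have hinner : ∀ (u w : EuclideanSpace ℝ (Fin n)), @inner ℝ _ _ u w = ⇑u ⬝ᵥ ⇑w := by
    intro u w
    simp [PiLp.inner_apply, dotProduct, RCLike.inner_apply, conj_trivial, mul_comm]
  let xE : EuclideanSpace ℝ (Fin n) := WithLp.toLp 2 x
  set c : Fin n → ℝ := fun i => v i ⬝ᵥ x with hcdef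
  have hc : ∀ i, @inner ℝ _ _ (b i) xE = c i := fun i => by rw [hinner]
  have h1 : ∑ i, c i • (b i) = xE := by
    rw [← b.sum_repr' xE]
    exact Finset.sum_congr rfl fun i _ => by rw [hc]
  have hrepr : x = ∑ i, c i • v i := by
    have h := congrArg WithLp.ofLp h1.symm; simp only [WithLp.ofLp_sum, WithLp.ofLp_smul] at h; exact h
  have hds : ∀ (w : Fin n → Fin n → ℝ), x ⬝ᵥ (∑ i, w i) = ∑ i, x ⬝ᵥ w i := by
    intro w
    simp only [dotProduct, Finset.sum_apply, Finset.mul_sum]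
    exact Finset.sum_comm
  have hAv : A *ᵥ x = ∑ i, (c i * hA.eigenvalues i) • v i := by
    conv_lhs => rw [hrepr]
    simp only [← Matrix.mulVecLin_apply, map_sum]
    refine Finset.sum_congr rfl fun i _ => ?_
    rw [Matrix.mulVecLin_apply, Matrix.mulVec_smul]
    have := hA.mulVec_eigenvectorBasis i
    rw [hvdef]
    simp only [← hbdefn] at this
    rw [this, smul_smul]
  have hQ : x ⬝ᵥ A *ᵥ x = ∑ i, hA.eigenvalues i * (c i * c i) := by
    rw [hAv, hds]
    refine Finset.sum_congr rfl fun i _ => ?_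
    rw [dotProduct_smul, smul_eq_mul, dotProduct_comm]
    show c i * hA.eigenvalues i * c i = _
    ring
  have hN : x ⬝ᵥ x = ∑ i, c i * c i := by
    nth_rewrite 2 [hrepr]
    rw [hds]
    refine Finset.sum_congr rfl fun i _ => ?_
    rw [dotProduct_smul, smul_eq_mul, dotProduct_comm]
  have key : μ₀ * (x ⬝ᵥ x) ≤ x ⬝ᵥ A *ᵥ x := by
    rw [hQ, hN, Finset.mul_sum]
    refine Finset.sum_le_sum fun i _ => ?_
    exact mul_le_mul_of_nonneg_right (hi₀ i (Finset.mem_univ i)) (mul_self_nonneg _)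
  have hN0 : 0 ≤ x ⬝ᵥ x := by
    rw [hN]
    exact Finset.sum_nonneg fun i _ => mul_self_nonneg _
  calc minEig G * (x ⬝ᵥ x) ≤ μ₀ * (x ⬝ᵥ x) := mul_le_mul_of_nonneg_right hminle hN0
    _ ≤ x ⬝ᵥ A *ᵥ x := key

lemma sum_extend_eq {m n : ℕ} {f : Fin m → Fin n} (hf : Function.Injective f)
    (F : Fin n → ℝ) (hF : ∀ v, (∀ u, f u ≠ v) → F v = 0) :
    ∑ v, F v = ∑ u, F (f u) := by
  classical
  rw [← Finset.sum_image (g := f) (f := F) (fun a _ b _ h => hf h)]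
  refine (Finset.sum_subset (Finset.subset_univ _) fun v _ hv => ?_).symm
  refine hF v fun u hu => hv ?_
  exact Finset.mem_image.2 ⟨u, Finset.mem_univ u, hu⟩

lemma extend_dot {m n : ℕ} {H : SimpleGraph (Fin m)} {G : SimpleGraph (Fin n)}
    (f : H ↪g G) (y : Fin m → ℝ) :
    (Function.extend (⇑f) y 0) ⬝ᵥ (Function.extend (⇑f) y 0) = ∑ u, y u * y u := by
  classical
  set x := Function.extend (⇑f) y 0 with hxdef
  have hxf : ∀ u, x (f u) = y u := fun u => f.injective.extend_apply y 0 u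
  have hx0 : ∀ v, (∀ u, f u ≠ v) → x v = 0 := by
    intro v hv
    rw [hxdef, Function.extend_apply' _ _ _ (by push_neg; exact hv)]
    rfl
  rw [show x ⬝ᵥ x = ∑ v, x v * x v from rfl,
    sum_extend_eq f.injective _ (fun v hv => by rw [hx0 v hv]; ring)]
  exact Finset.sum_congr rfl fun u _ => by rw [hxf]

lemma extend_quad {m n : ℕ} {H : SimpleGraph (Fin m)} {G : SimpleGraph (Fin n)}
    (f : H ↪g G) (y : Fin m → ℝ) :
    (Function.extend (⇑f) y 0) ⬝ᵥ (adjMat G) *ᵥ (Function.extend (⇑f) y 0)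
      = ∑ u, ∑ u', (if H.Adj u u' then y u * y u' else 0) := by
  classical
  set x := Function.extend (⇑f) y 0 with hxdef
  have hxf : ∀ u, x (f u) = y u := fun u => f.injective.extend_apply y 0 u
  have hx0 : ∀ v, (∀ u, f u ≠ v) → x v = 0 := by
    intro v hv
    rw [hxdef, Function.extend_apply' _ _ _ (by push_neg; exact hv)]
    rfl
  have h1 : x ⬝ᵥ (adjMat G) *ᵥ x = ∑ v, x v * (∑ w, (adjMat G) v w * x w) := rfl
  rw [h1, sum_extend_eq f.injective _ (fun v hv => by rw [hx0 v hv]; ring)]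
  refine Finset.sum_congr rfl fun u _ => ?_
  rw [hxf, sum_extend_eq f.injective (fun w => (adjMat G) (f u) w * x w)
    (fun w hw => by show adjMat G (f u) w * x w = 0; rw [hx0 w hw]; ring), Finset.mul_sum]
  refine Finset.sum_congr rfl fun u' _ => ?_
  rw [hxf]
  simp only [adjMat, Matrix.of_apply, f.map_adj_iff]
  split <;> ring

lemma sum_Ico_const (g : ℕ → ℝ) (a b : ℕ) (c : ℝ) (h : ∀ i, a ≤ i → i < b → g i = c) :
    ∑ i ∈ Finset.Ico a b, g i = ((b - a : ℕ) : ℝ) * c := by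
  rw [Finset.sum_congr rfl (fun i hi => h i (Finset.mem_Ico.1 hi).1 (Finset.mem_Ico.1 hi).2),
    Finset.sum_const, Nat.card_Ico, nsmul_eq_mul]

lemma sum_range_split (g : ℕ → ℝ) {a b c : ℕ} (hab : a ≤ b) (hbc : b ≤ c) :
    ∑ i ∈ Finset.range c, g i =
      (∑ i ∈ Finset.Ico 0 a, g i) + (∑ i ∈ Finset.Ico a b, g i) + (∑ i ∈ Finset.Ico b c, g i) := by
  rw [Finset.range_eq_Ico,
    ← Finset.sum_Ico_consecutive g (Nat.zero_le b) hbc,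
    ← Finset.sum_Ico_consecutive g (Nat.zero_le a) hab]

lemma sum_univ_step (m : ℕ) (g : ℕ → ℝ) (a b : ℕ) (hab : a ≤ b) (hbm : b ≤ m)
    (c1 c2 c3 : ℝ)
    (h1 : ∀ i, i < a → g i = c1) (h2 : ∀ i, a ≤ i → i < b → g i = c2)
    (h3 : ∀ i, b ≤ i → i < m → g i = c3) :
    ∑ i ∈ Finset.range m, g i
      = (a : ℝ) * c1 + ((b - a : ℕ) : ℝ) * c2 + ((m - b : ℕ) : ℝ) * c3 := by
  rw [sum_range_split g hab hbm,
    sum_Ico_const g 0 a c1 (fun i _ hi => h1 i hi),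
    sum_Ico_const g a b c2 h2,
    sum_Ico_const g b m c3 h3]
  norm_num


lemma star_contra {n : ℕ} {G : SimpleGraph (Fin n)} {lam : ℝ} (hlam : 0 < lam)
    (k : ℕ) (hk : 3 * lam ≤ (k : ℝ)) (hmin : -lam ≤ minEig G) :
    IsEmpty (starG (k * k) ↪g G) := by
  constructor
  intro f
  set T := k * k with hTdef
  have hk0 : (0:ℝ) < k := lt_of_lt_of_le (by linarith) hk
  set y : Fin (T+1) → ℝ := fun a => if a.val = 0 then -(k:ℝ) else 1 with hy
  have hx0 : Function.extend (⇑f) y 0 ≠ 0 := by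
    intro h
    have h1 : Function.extend (⇑f) y 0 (f 0) = y 0 := f.injective.extend_apply y 0 0
    rw [h] at h1
    have h2 : y 0 = -(k:ℝ) := by simp [hy]
    rw [h2] at h1
    simp only [Pi.zero_apply] at h1
    linarith [h1.symm]
  have key := minEig_mul_le G (Function.extend (⇑f) y 0) hx0
  rw [extend_dot f y, extend_quad f y] at key
  -- the norm sum
  have hN : ∑ u, y u * y u = (k:ℝ)*k + T := by
    have hpt : ∀ u : Fin (T+1), y u * y u
        = (fun i : ℕ => if i = 0 then (k:ℝ)*(k:ℝ) else 1) u.val := by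
      intro u
      simp only [hy]
      split_ifs <;> ring
    rw [Finset.sum_congr rfl (fun u _ => hpt u),
      Fin.sum_univ_eq_sum_range (fun i : ℕ => if i = 0 then (k:ℝ)*(k:ℝ) else 1) (T+1),
      sum_univ_step (T+1) _ 1 1 (le_refl 1) (by omega) ((k:ℝ)*(k:ℝ)) 0 1
        (fun i hi => by rw [if_pos (by omega)])
        (fun i h1 h2 => by omega)
        (fun i h1 h2 => by rw [if_neg (by omega)])]
    have e2 : (T + 1 - 1 : ℕ) = T := rfl
    rw [e2]
    push_cast
    ring
  -- the quadratic form sum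
  set p : ℕ → ℝ := fun i => if i = 0 then -(k:ℝ) else 0 with hp
  set q : ℕ → ℝ := fun i => if i = 0 then 0 else 1 with hq
  have hadj : ∀ a b : Fin (T+1), (starG T).Adj a b ↔
      (a.val ≠ b.val ∧ (a.val = 0 ∨ b.val = 0)) := by
    intro a b
    rw [starG, SimpleGraph.fromRel_adj]
    simp only [ne_eq, Fin.ext_iff, Fin.val_zero]
  have hpt : ∀ a b : Fin (T+1), (if (starG T).Adj a b then y a * y b else 0)
      = p a.val * q b.val + q a.val * p b.val := by
    intro a b
    simp only [hadj, hy, hp, hq]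
    split_ifs <;> first | ring1 | (exfalso; omega)
  have hSp : ∑ a : Fin (T+1), p a.val = -(k:ℝ) := by
    rw [Fin.sum_univ_eq_sum_range p (T+1),
      sum_univ_step (T+1) p 1 1 (le_refl 1) (by omega) (-(k:ℝ)) 0 0
        (fun i hi => by simp only [hp]; rw [if_pos (by omega)])
        (fun i h1 h2 => by omega)
        (fun i h1 h2 => by simp only [hp]; rw [if_neg (by omega)])]
    norm_num
  have hSq : ∑ a : Fin (T+1), q a.val = (T:ℝ) := by
    rw [Fin.sum_univ_eq_sum_range q (T+1),
      sum_univ_step (T+1) q 1 1 (le_refl 1) (by omega) 0 0 1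
        (fun i hi => by simp only [hq]; rw [if_pos (by omega)])
        (fun i h1 h2 => by omega)
        (fun i h1 h2 => by simp only [hq]; rw [if_neg (by omega)])]
    have e2 : (T + 1 - 1 : ℕ) = T := rfl
    rw [e2]
    norm_num
  have hQ : ∑ u, ∑ u', (if (starG T).Adj u u' then y u * y u' else 0)
      = -(k:ℝ) * T + T * (-(k:ℝ)) := by
    calc ∑ u, ∑ u', (if (starG T).Adj u u' then y u * y u' else 0)
        = ∑ u : Fin (T+1), ∑ u' : Fin (T+1), (p u.val * q u'.val + q u.val * p u'.val) :=
          Finset.sum_congr rfl fun u _ => Finset.sum_congr rfl fun u' _ => hpt u u'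
      _ = (∑ a : Fin (T+1), p a.val) * (∑ b : Fin (T+1), q b.val)
            + (∑ a : Fin (T+1), q a.val) * (∑ b : Fin (T+1), p b.val) := by
          simp only [Finset.sum_add_distrib, ← Finset.mul_sum, ← Finset.sum_mul]
      _ = -(k:ℝ) * T + T * (-(k:ℝ)) := by rw [hSp, hSq]
  rw [hN, hQ] at key
  have hmul : -lam * ((k:ℝ)*k + T) ≤ minEig G * ((k:ℝ)*k + T) := by
    apply mul_le_mul_of_nonneg_right hmin
    positivity
  have hchain := hmul.trans key
  have hT : (T:ℝ) = (k:ℝ) * k := by rw [hTdef]; push_cast; ring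
  rw [hT] at hchain
  have h1 : 3 * lam * ((k:ℝ)*k) ≤ (k:ℝ) * ((k:ℝ)*k) :=
    mul_le_mul_of_nonneg_right hk (by positivity)
  have h2 : 0 < lam * ((k:ℝ)*k) := by positivity
  nlinarith [hchain, h1, h2]

lemma tilde_contra {n : ℕ} {G : SimpleGraph (Fin n)} {lam : ℝ} (hlam : 0 < lam)
    (k : ℕ) (hk : 3 * lam ≤ (k : ℝ)) (hmin : -lam ≤ minEig G) :
    IsEmpty (tildeK (k * k) ↪g G) := by
  constructor
  intro f
  set T := k * k with hTdef
  have hk0 : (0:ℝ) < k := lt_of_lt_of_le (by linarith) hk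
  have hkpos : 0 < k := by exact_mod_cast hk0
  have hTpos : 0 < T := Nat.mul_pos hkpos hkpos
  set y : Fin (2*T+1) → ℝ :=
    fun a => if a.val < T then 1 else if a.val < 2*T then -1 else -(k:ℝ) with hy
  have hx0 : Function.extend (⇑f) y 0 ≠ 0 := by
    intro h
    have h1 : Function.extend (⇑f) y 0 (f ⟨0, by omega⟩) = y ⟨0, by omega⟩ :=
      f.injective.extend_apply y 0 _
    rw [h] at h1
    have h2 : y ⟨0, by omega⟩ = 1 := by simp [hy, hTpos]
    rw [h2] at h1
    simp only [Pi.zero_apply] at h1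
    exact one_ne_zero h1.symm
  have key := minEig_mul_le G (Function.extend (⇑f) y 0) hx0
  rw [extend_dot f y, extend_quad f y] at key
  set uf : ℕ → ℝ := fun i => if i < T then 1 else if i < 2*T then -1 else 0 with huf
  set pf : ℕ → ℝ := fun i => if i = 2*T then -(k:ℝ) else 0 with hpf
  set qf : ℕ → ℝ := fun i => if i < T then (1:ℝ) else 0 with hqf
  -- the norm sum
  have hN : ∑ u, y u * y u = 2*(T:ℝ) + (k:ℝ)*k := by
    have hpt : ∀ u : Fin (2*T+1), y u * y u
        = (fun i : ℕ => if i < 2*T then (1:ℝ) else (k:ℝ)*(k:ℝ)) u.val := by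
      intro u
      simp only [hy]
      split_ifs <;> first | ring1 | (exfalso; omega)
    rw [Finset.sum_congr rfl (fun u _ => hpt u),
      Fin.sum_univ_eq_sum_range (fun i : ℕ => if i < 2*T then (1:ℝ) else (k:ℝ)*(k:ℝ)) (2*T+1),
      sum_univ_step (2*T+1) _ (2*T) (2*T) (le_refl _) (by omega) 1 0 ((k:ℝ)*(k:ℝ))
        (fun i hi => by rw [if_pos (by omega)])
        (fun i h1 h2 => by omega)
        (fun i h1 h2 => by rw [if_neg (by omega)])]
    have e1 : (2*T - 2*T : ℕ) = 0 := by omega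
    have e2 : (2*T + 1 - 2*T : ℕ) = 1 := by omega
    rw [e1, e2]
    push_cast
    ring
  -- adjacency description
  have hadj : ∀ a b : Fin (2*T+1), (tildeK T).Adj a b ↔
      (a.val ≠ b.val ∧ ((a.val < 2*T ∧ b.val < 2*T) ∨ (a.val = 2*T ∧ b.val < T)
        ∨ (b.val = 2*T ∧ a.val < T))) := by
    intro a b
    rw [tildeK, SimpleGraph.fromRel_adj]
    simp only [Fin.ext_iff, ne_eq]
    constructor
    · rintro ⟨h1, h2⟩; exact ⟨h1, by omega⟩
    · rintro ⟨h1, h2⟩; exact ⟨h1, by omega⟩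
  -- pointwise identity
  have hpt : ∀ a b : Fin (2*T+1), (if (tildeK T).Adj a b then y a * y b else 0)
      = (uf a.val * uf b.val - (if a.val = b.val then uf a.val * uf b.val else 0))
        + pf a.val * qf b.val + qf a.val * pf b.val := by
    intro a b
    simp only [hadj, hy, huf, hpf, hqf]
    split_ifs <;> first | ring1 | (exfalso; omega)
  -- individual sums
  have hSu : ∑ a : Fin (2*T+1), uf a.val = 0 := by
    rw [Fin.sum_univ_eq_sum_range uf (2*T+1),
      sum_univ_step (2*T+1) uf T (2*T) (by omega) (by omega) 1 (-1) 0
        (fun i hi => by simp only [huf]; rw [if_pos (by omega)])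
        (fun i h1 h2 => by simp only [huf]; rw [if_neg (by omega), if_pos (by omega)])
        (fun i h1 h2 => by simp only [huf]; rw [if_neg (by omega), if_neg (by omega)])]
    have e1 : (2*T - T : ℕ) = T := by omega
    rw [e1]
    push_cast
    ring
  have hSuu : ∑ a : Fin (2*T+1), uf a.val * uf a.val = 2*(T:ℝ) := by
    have hpt2 : ∀ a : Fin (2*T+1), uf a.val * uf a.val
        = (fun i : ℕ => if i < 2*T then (1:ℝ) else 0) a.val := by
      intro a
      simp only [huf]
      split_ifs <;> first | ring1 | (exfalso; omega)
    rw [Finset.sum_congr rfl (fun a _ => hpt2 a),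
      Fin.sum_univ_eq_sum_range (fun i : ℕ => if i < 2*T then (1:ℝ) else 0) (2*T+1),
      sum_univ_step (2*T+1) _ (2*T) (2*T) (le_refl _) (by omega) 1 0 0
        (fun i hi => by rw [if_pos (by omega)])
        (fun i h1 h2 => by omega)
        (fun i h1 h2 => by rw [if_neg (by omega)])]
    push_cast
    ring
  have hSp : ∑ a : Fin (2*T+1), pf a.val = -(k:ℝ) := by
    rw [Fin.sum_univ_eq_sum_range pf (2*T+1),
      sum_univ_step (2*T+1) pf (2*T) (2*T+1) (by omega) (le_refl _) 0 (-(k:ℝ)) 0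
        (fun i hi => by simp only [hpf]; rw [if_neg (by omega)])
        (fun i h1 h2 => by simp only [hpf]; rw [if_pos (by omega)])
        (fun i h1 h2 => by omega)]
    have e1 : (2*T + 1 - 2*T : ℕ) = 1 := by omega
    rw [e1]
    push_cast
    ring
  have hSq : ∑ a : Fin (2*T+1), qf a.val = (T:ℝ) := by
    rw [Fin.sum_univ_eq_sum_range qf (2*T+1),
      sum_univ_step (2*T+1) qf T T (le_refl _) (by omega) 1 0 0
        (fun i hi => by simp only [hqf]; rw [if_pos (by omega)])
        (fun i h1 h2 => by omega)
        (fun i h1 h2 => by simp only [hqf]; rw [if_neg (by omega)])]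
    push_cast
    ring
  -- diagonal sum
  have hdiag : ∀ a : Fin (2*T+1),
      (∑ b : Fin (2*T+1), if a.val = b.val then uf a.val * uf b.val else 0)
        = uf a.val * uf a.val := by
    intro a
    have : ∀ b : Fin (2*T+1), (if a.val = b.val then uf a.val * uf b.val else 0)
        = (if b = a then uf a.val * uf b.val else 0) := by
      intro b
      refine if_congr ⟨fun h => (Fin.ext h).symm, fun h => by rw [h]⟩ rfl rfl
    rw [Finset.sum_congr rfl (fun b _ => this b), Finset.sum_ite_eq' Finset.univ a
      (fun b => uf a.val * uf b.val)]
    simp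
  -- the quadratic form
  have hQ : ∑ u, ∑ u', (if (tildeK T).Adj u u' then y u * y u' else 0)
      = -2*(T:ℝ) + (-(k:ℝ) * T + T * (-(k:ℝ))) := by
    calc ∑ u, ∑ u', (if (tildeK T).Adj u u' then y u * y u' else 0)
        = ∑ a : Fin (2*T+1), ∑ b : Fin (2*T+1),
            ((uf a.val * uf b.val - (if a.val = b.val then uf a.val * uf b.val else 0))
              + pf a.val * qf b.val + qf a.val * pf b.val) :=
          Finset.sum_congr rfl fun a _ => Finset.sum_congr rfl fun b _ => hpt a b
      _ = (∑ a : Fin (2*T+1), ∑ b : Fin (2*T+1), uf a.val * uf b.val)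
            - (∑ a : Fin (2*T+1), ∑ b : Fin (2*T+1),
                if a.val = b.val then uf a.val * uf b.val else 0)
            + (∑ a : Fin (2*T+1), ∑ b : Fin (2*T+1), pf a.val * qf b.val)
            + (∑ a : Fin (2*T+1), ∑ b : Fin (2*T+1), qf a.val * pf b.val) := by
          simp only [Finset.sum_add_distrib, Finset.sum_sub_distrib]
      _ = (∑ a : Fin (2*T+1), uf a.val) * (∑ b : Fin (2*T+1), uf b.val)
            - (∑ a : Fin (2*T+1), uf a.val * uf a.val)
            + (∑ a : Fin (2*T+1), pf a.val) * (∑ b : Fin (2*T+1), qf b.val)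
            + (∑ a : Fin (2*T+1), qf a.val) * (∑ b : Fin (2*T+1), pf b.val) := by
          rw [Finset.sum_congr rfl (fun a _ => hdiag a)]
          simp only [← Finset.mul_sum, ← Finset.sum_mul]
      _ = -2*(T:ℝ) + (-(k:ℝ) * T + T * (-(k:ℝ))) := by
          rw [hSu, hSuu, hSp, hSq]
          ring
  rw [hN, hQ] at key
  have hmul : -lam * (2*(T:ℝ) + (k:ℝ)*k) ≤ minEig G * (2*(T:ℝ) + (k:ℝ)*k) := by
    apply mul_le_mul_of_nonneg_right hmin
    positivity
  have hchain := hmul.trans key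
  have hT : (T:ℝ) = (k:ℝ) * k := by rw [hTdef]; push_cast; ring
  rw [hT] at hchain
  have h1 : 3 * lam * ((k:ℝ)*k) ≤ (k:ℝ) * ((k:ℝ)*k) :=
    mul_le_mul_of_nonneg_right hk (by positivity)
  have h2 : 0 < lam * ((k:ℝ)*k) := by positivity
  nlinarith [hchain, h1, h2, hk0]

/-- **Hoffman.** For every positive real `λ` there is a positive integer `T` such that
every graph with smallest eigenvalue at least `-λ` contains neither `K_{1,T}` nor
`K̃_{2T}` as an induced subgraph. -/
theorem stmt9 (lam : ℝ) (hlam : 0 < lam) :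
    ∃ T : ℕ, 0 < T ∧ ∀ (n : ℕ) (G : SimpleGraph (Fin n)),
      -lam ≤ minEig G →
      IsEmpty (starG T ↪g G) ∧ IsEmpty (tildeK T ↪g G) := by
  set k : ℕ := 3 * ⌈lam⌉₊ with hkdef
  have hk : 3 * lam ≤ (k : ℝ) := by
    have h1 : lam ≤ (⌈lam⌉₊ : ℝ) := Nat.le_ceil lam
    rw [hkdef]
    push_cast
    linarith
  have hkpos : 0 < k := by
    have : 0 < ⌈lam⌉₊ := Nat.ceil_pos.mpr hlam
    omega
  exact ⟨k * k, Nat.mul_pos hkpos hkpos,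
    fun n G hmin => ⟨star_contra hlam k hk hmin, tilde_contra hlam k hk hmin⟩⟩
end
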